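/- Let M : H(n) → ℝ^m be an r-complete measurement that is surjective onto ℝ^m and has nontrivial kernel. Let σ_min > 0 be the smallest singular value of M (as a linear map from H(n) with the Hilbert–Schmidt norm to ℝ^m with the Euclidean norm), and let κ := −max{λ_{n−r}(Z) : Z ∈ Ker(M), ‖Z‖₂ = 1}. Then for every ε > 0, every X_r ∈ S_r^n, every Hermitian E with ‖M(E)‖₂ ≤ ε, and every positive semidefinite Hermitian Y with ‖M(Y) − M(X_r + E)‖₂ ≤ ε, one has ‖Y − X_r‖₂ ≤ (2/σ_min)·(1 + 1/κ)·ε. -/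

import Mathlib

open Matrix
open scoped ComplexOrder

noncomputable section

/-- The Frobenius norm `‖X‖₂` of a complex matrix. -/
def frobNorm {n : ℕ} (X : Matrix (Fin n) (Fin n) ℂ) : ℝ :=
  Real.sqrt (∑ i, ∑ j, Complex.normSq (X i j))

/-- The Hilbert–Schmidt inner product `⟨X,Y⟩ = tr(X*Y)` (real part); for Hermitian matrices
this is `tr(XY)`. -/
def hsInner {n : ℕ} (X Y : Matrix (Fin n) (Fin n) ℂ) : ℝ := ((Xᴴ * Y).trace).re

def rComplete {n : ℕ} {ι : Type*} [Fintype ι]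
    (M : Matrix (Fin n) (Fin n) ℂ →ₗ[ℝ] EuclideanSpace ℝ ι) (r : ℕ) : Prop :=
  ∀ X X' : Matrix (Fin n) (Fin n) ℂ, X.PosSemidef → X.rank ≤ r → X'.PosSemidef →
    X ≠ X' → M X ≠ M X'

/-- The eigenvalues of a Hermitian matrix listed in decreasing order (with multiplicity);
`eigenvaluesDesc hZ i` is `λ_{i+1}(Z)` in the paper's (1-based) notation. -/
noncomputable def eigenvaluesDesc {n : ℕ} {Z : Matrix (Fin n) (Fin n) ℂ}
    (hZ : Z.IsHermitian) : Fin n → ℝ :=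
  fun i => hZ.eigenvalues (Tuple.sort hZ.eigenvalues i.rev)

namespace Stmt13Aux
variable {n : ℕ}

def n2 (x : Fin n → ℂ) : ℝ := ∑ i, Complex.normSq (x i)

def qf (A : Matrix (Fin n) (Fin n) ℂ) (x : Fin n → ℂ) : ℝ := (star x ⬝ᵥ A *ᵥ x).re

lemma n2_nonneg (x : Fin n → ℂ) : 0 ≤ n2 x :=
  Finset.sum_nonneg fun _ _ => Complex.normSq_nonneg _

lemma n2_pos {x : Fin n → ℂ} (hx : x ≠ 0) : 0 < n2 x := by
  obtain ⟨i, hi⟩ := Function.ne_iff.mp hx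
  exact Finset.sum_pos' (fun _ _ => Complex.normSq_nonneg _)
    ⟨i, Finset.mem_univ i, Complex.normSq_pos.2 hi⟩

lemma n2_eq_re (x : Fin n → ℂ) : n2 x = (star x ⬝ᵥ x).re := by
  simp [n2, dotProduct, Complex.re_sum, Complex.normSq_apply, Complex.mul_re]

lemma qf_sub (A B : Matrix (Fin n) (Fin n) ℂ) (x : Fin n → ℂ) :
    qf (A - B) x = qf A x - qf B x := by
  simp [qf, Matrix.sub_mulVec, dotProduct_sub, Complex.sub_re]

lemma qf_smul (c : ℝ) (A : Matrix (Fin n) (Fin n) ℂ) (x : Fin n → ℂ) :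
    qf (c • A) x = c * qf A x := by
  rw [qf, smul_mulVec, dotProduct_smul]
  simp [qf, Complex.smul_re]

lemma qf_nonneg {A : Matrix (Fin n) (Fin n) ℂ} (hA : A.PosSemidef) (x : Fin n → ℂ) :
    0 ≤ qf A x := by
  have := hA.dotProduct_mulVec_nonneg x
  rw [Complex.le_def] at this
  simpa [qf] using this.1

lemma qf_zero_of_mulVec_zero {A : Matrix (Fin n) (Fin n) ℂ} {x : Fin n → ℂ}
    (h : A *ᵥ x = 0) : qf A x = 0 := by simp [qf, h]

-- Cauchy–Schwarz for the complex dot product, via EuclideanSpace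
lemma abs_dot_le (a b : Fin n → ℂ) :
    ‖star a ⬝ᵥ b‖ ≤ Real.sqrt (n2 a) * Real.sqrt (n2 b) := by
  let a' : EuclideanSpace ℂ (Fin n) := (WithLp.equiv 2 (Fin n → ℂ)).symm a
  let b' : EuclideanSpace ℂ (Fin n) := (WithLp.equiv 2 (Fin n → ℂ)).symm b
  have hinner : (inner ℂ a' b' : ℂ) = star a ⬝ᵥ b := by
    simp [PiLp.inner_apply, RCLike.inner_apply, dotProduct, a', b', mul_comm]
  have hna : ‖a'‖ = Real.sqrt (n2 a) := by
    rw [EuclideanSpace.norm_eq]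
    congr 1
    simp [n2, Complex.sq_norm, a']
  have hnb : ‖b'‖ = Real.sqrt (n2 b) := by
    rw [EuclideanSpace.norm_eq]
    congr 1
    simp [n2, Complex.sq_norm, b']
  calc ‖star a ⬝ᵥ b‖ = ‖(inner ℂ a' b' : ℂ)‖ := by rw [hinner]
    _ ≤ ‖a'‖ * ‖b'‖ := norm_inner_le_norm a' b'
    _ = _ := by rw [hna, hnb]

lemma n2_mulVec_le (W : Matrix (Fin n) (Fin n) ℂ) (x : Fin n → ℂ) :
    n2 (W *ᵥ x) ≤ (∑ i, ∑ j, Complex.normSq (W i j)) * n2 x := by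
  rw [n2, Finset.sum_mul]
  refine Finset.sum_le_sum fun i _ => ?_
  have h1 : (W *ᵥ x) i = star (fun j => star (W i j)) ⬝ᵥ x := by
    simp [mulVec, dotProduct]
  have h2 := abs_dot_le (fun j => star (W i j)) x
  have h3 : Complex.normSq ((W *ᵥ x) i) = ‖(W *ᵥ x) i‖ ^ 2 := by
    rw [Complex.sq_norm]
  rw [h3, h1]
  have hb : Real.sqrt (n2 fun j => star (W i j)) * Real.sqrt (n2 x)
      = Real.sqrt ((n2 fun j => star (W i j)) * n2 x) :=
    (Real.sqrt_mul (n2_nonneg _) _).symm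
  have := pow_le_pow_left₀ (norm_nonneg _) (h2.trans_eq hb) 2
  rw [Real.sq_sqrt (mul_nonneg (n2_nonneg _) (n2_nonneg _))] at this
  refine this.trans_eq ?_
  congr 1
  simp [n2]

lemma abs_qf_le (W : Matrix (Fin n) (Fin n) ℂ) (x : Fin n → ℂ) :
    |qf W x| ≤ frobNorm W * n2 x := by
  have h1 : |qf W x| ≤ ‖star x ⬝ᵥ W *ᵥ x‖ := by
    rw [qf]; exact Complex.abs_re_le_norm _
  have h2 := abs_dot_le x (W *ᵥ x)
  have h3 : Real.sqrt (n2 (W *ᵥ x)) ≤ frobNorm W * Real.sqrt (n2 x) := by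
    have := Real.sqrt_le_sqrt (n2_mulVec_le W x)
    rw [Real.sqrt_mul (show (0:ℝ) ≤ ∑ i, ∑ j, Complex.normSq (W i j) from Finset.sum_nonneg fun _ _ => Finset.sum_nonneg fun _ _ => Complex.normSq_nonneg _) (n2 x)] at this
    exact this.trans_eq rfl
  calc |qf W x| ≤ Real.sqrt (n2 x) * Real.sqrt (n2 (W *ᵥ x)) := h1.trans h2
    _ ≤ Real.sqrt (n2 x) * (frobNorm W * Real.sqrt (n2 x)) := by
        exact mul_le_mul_of_nonneg_left h3 (Real.sqrt_nonneg _)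
    _ = frobNorm W * (Real.sqrt (n2 x) * Real.sqrt (n2 x)) := by ring
    _ = frobNorm W * n2 x := by rw [Real.mul_self_sqrt (n2_nonneg _)]


end Stmt13Aux

section
open Matrix Finset
namespace Stmt13Aux
variable {n : ℕ}

def coordSub (S : Finset (Fin n)) : Submodule ℂ (Fin n → ℂ) where
  carrier := {x | ∀ i ∉ S, x i = 0}
  add_mem' := fun ha hb i hi => by simp [ha i hi, hb i hi]
  zero_mem' := fun i _ => rfl
  smul_mem' := fun c x hx i hi => by simp [hx i hi]

lemma mem_coordSub {S : Finset (Fin n)} {x : Fin n → ℂ} :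
    x ∈ coordSub S ↔ ∀ i ∉ S, x i = 0 := Iff.rfl

def coordSubEquiv (S : Finset (Fin n)) : coordSub S ≃ₗ[ℂ] (↥S → ℂ) where
  toFun x := fun i => x.1 i.1
  map_add' _ _ := rfl
  map_smul' _ _ := rfl
  invFun y := ⟨fun i => if h : i ∈ S then y ⟨i, h⟩ else 0, fun i hi => by simp [hi]⟩
  left_inv x := by
    ext i
    by_cases h : i ∈ S
    · simp [h]
    · simp [h, x.2 i h]
  right_inv y := by
    ext i
    simp [i.2]

lemma finrank_coordSub (S : Finset (Fin n)) :
    Module.finrank ℂ (coordSub S) = S.card := by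
  rw [(coordSubEquiv S).finrank_eq, Module.finrank_pi, Fintype.card_coe]

lemma exists_mem_inf (V W : Submodule ℂ (Fin n → ℂ))
    (h : n < Module.finrank ℂ V + Module.finrank ℂ W) :
    ∃ x : Fin n → ℂ, x ≠ 0 ∧ x ∈ V ∧ x ∈ W := by
  have hfull : Module.finrank ℂ (Fin n → ℂ) = n := by
    rw [Module.finrank_pi, Fintype.card_fin]
  have hsum := Submodule.finrank_sup_add_finrank_inf_eq V W
  have hle : Module.finrank ℂ ↥(V ⊔ W) ≤ n := by
    have := Submodule.finrank_le (V ⊔ W)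
    rwa [hfull] at this
  have hpos : 0 < Module.finrank ℂ ↥(V ⊓ W) := by omega
  obtain ⟨x, hx⟩ := Module.finrank_pos_iff_exists_ne_zero.mp hpos
  exact ⟨x.1, by simpa [Submodule.coe_eq_zero] using hx,
    (Submodule.mem_inf.mp x.2).1, (Submodule.mem_inf.mp x.2).2⟩

lemma model_count (lam : Fin n → ℝ) (t : ℝ) (d : ℕ) (V : Submodule ℂ (Fin n → ℂ))
    (hV : d ≤ Module.finrank ℂ V)
    (h : ∀ x ∈ V, t * n2 x ≤ ∑ i, lam i * Complex.normSq (x i)) :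
    d ≤ (univ.filter fun i => t ≤ lam i).card := by
  by_contra hc
  push_neg at hc
  set S : Finset (Fin n) := univ.filter fun i => ¬ t ≤ lam i with hS
  have hcard : (univ.filter fun i => t ≤ lam i).card + S.card = n := by
    rw [hS, Finset.card_filter_add_card_filter_not]
    simp
  have hcle : (univ.filter fun i => t ≤ lam i).card ≤ n := by omega
  have hlt : n < Module.finrank ℂ V + Module.finrank ℂ (coordSub S) := by
    rw [finrank_coordSub]
    omega
  obtain ⟨x, hx0, hxV, hxS⟩ := exists_mem_inf V (coordSub S) hlt
  have hxS' : ∀ i ∉ S, x i = 0 := hxS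
  have key : ∑ i, lam i * Complex.normSq (x i) < ∑ i, t * Complex.normSq (x i) := by
    obtain ⟨i0, hi0⟩ := Function.ne_iff.mp hx0
    have hi0S : i0 ∈ S := by
      by_contra hmem
      exact hi0 (hxS' i0 hmem)
    have hi0lam : ¬ t ≤ lam i0 := by
      simpa [hS] using hi0S
    refine Finset.sum_lt_sum (fun i _ => ?_) ⟨i0, Finset.mem_univ i0, ?_⟩
    · by_cases hi : i ∈ S
      · have : ¬ t ≤ lam i := by simpa [hS] using hi
        exact mul_le_mul_of_nonneg_right (le_of_lt (not_le.mp this)) (Complex.normSq_nonneg _)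
      · simp [hxS' i hi]
    · exact mul_lt_mul_of_pos_right (not_le.mp hi0lam) (Complex.normSq_pos.2 hi0)
  have := h x hxV
  rw [← Finset.mul_sum] at key
  have : t * n2 x < t * n2 x := lt_of_le_of_lt this key
  exact lt_irrefl _ this

lemma card_filter_comp_sort (lam : Fin n → ℝ) (p : ℝ → Prop) [DecidablePred p] :
    (univ.filter fun j => p (lam (Tuple.sort lam j))).card
      = (univ.filter fun i => p (lam i)).card := by
  rw [← Fintype.card_subtype, ← Fintype.card_subtype]
  exact Fintype.card_congr (Equiv.subtypeEquiv (Tuple.sort lam) (fun j => Iff.rfl))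

lemma count_to_sorted (lam : Fin n → ℝ) (t : ℝ) (d : ℕ) (hd : 1 ≤ d) (hdn : d ≤ n)
    (hc : d ≤ (univ.filter fun i => t ≤ lam i).card) :
    t ≤ lam (Tuple.sort lam ⟨n - d, by omega⟩) := by
  by_contra hlt
  push_neg at hlt
  have hmono := Tuple.monotone_sort lam
  have hsub : (univ.filter fun j => t ≤ lam (Tuple.sort lam j))
      ⊆ Finset.Ioi (⟨n - d, by omega⟩ : Fin n) := by
    intro j hj
    rw [Finset.mem_filter] at hj
    rw [Finset.mem_Ioi]
    by_contra hle
    push_neg at hle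
    exact absurd (hj.2.trans (hmono hle)) (not_le.mpr hlt)
  have := Finset.card_le_card hsub
  rw [card_filter_comp_sort lam (fun s => t ≤ s), Fin.card_Ioi] at this
  simp only at this
  omega

lemma sorted_to_count (lam : Fin n → ℝ) (j : Fin n)
    (hge : 0 ≤ lam (Tuple.sort lam j)) :
    (univ.filter fun i => lam i < 0).card ≤ j.val := by
  have hmono := Tuple.monotone_sort lam
  have hsub : (univ.filter fun k => lam (Tuple.sort lam k) < 0) ⊆ Finset.Iio j := by
    intro k hk
    rw [Finset.mem_filter] at hk
    rw [Finset.mem_Iio]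
    by_contra hle
    push_neg at hle
    exact absurd (hge.trans (hmono hle)) (not_le.mpr hk.2)
  have := Finset.card_le_card hsub
  rwa [card_filter_comp_sort lam (fun s => s < 0), Fin.card_Iio] at this

end Stmt13Aux
end

section
open Matrix Finset
namespace Stmt13Aux
variable {n : ℕ}


section Spectral
variable {A : Matrix (Fin n) (Fin n) ℂ} (hA : A.IsHermitian)

local notation "U" => (hA.eigenvectorUnitary : Matrix (Fin n) (Fin n) ℂ)

lemma U_mul_star : U * star U = 1 :=
  Matrix.mem_unitaryGroup_iff.mp hA.eigenvectorUnitary.2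

lemma star_mul_U : star U * U = 1 :=
  Matrix.mem_unitaryGroup_iff'.mp hA.eigenvectorUnitary.2

/-- The unitary change of variables `x ↦ (star U) *ᵥ x` as a linear equivalence. -/
noncomputable def psiEquiv : (Fin n → ℂ) ≃ₗ[ℂ] (Fin n → ℂ) :=
  LinearEquiv.ofLinear (Matrix.mulVecLin (star U)) (Matrix.mulVecLin U)
    (by rw [← Matrix.mulVecLin_mul, star_mul_U hA, Matrix.mulVecLin_one])
    (by rw [← Matrix.mulVecLin_mul, U_mul_star hA, Matrix.mulVecLin_one])

lemma psiEquiv_apply (x : Fin n → ℂ) : psiEquiv hA x = star U *ᵥ x := rfl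

lemma star_row_dot (x : Fin n → ℂ) : star x ᵥ* U = star (star U *ᵥ x) := by
  rw [Matrix.star_mulVec, Matrix.star_eq_conjTranspose, Matrix.conjTranspose_conjTranspose]

lemma n2_psi (x : Fin n → ℂ) : n2 (star U *ᵥ x) = n2 x := by
  rw [n2_eq_re, n2_eq_re]
  congr 1
  calc star (star U *ᵥ x) ⬝ᵥ (star U *ᵥ x)
      = (star x ᵥ* U) ⬝ᵥ (star U *ᵥ x) := by rw [star_row_dot]
    _ = star x ⬝ᵥ U *ᵥ (star U *ᵥ x) := (Matrix.dotProduct_mulVec _ _ _).symm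
    _ = star x ⬝ᵥ (U * star U) *ᵥ x := by rw [Matrix.mulVec_mulVec]
    _ = star x ⬝ᵥ x := by rw [U_mul_star hA, Matrix.one_mulVec]

lemma qf_eq_sum (x : Fin n → ℂ) :
    qf A x = ∑ i, hA.eigenvalues i * Complex.normSq ((star U *ᵥ x) i) := by
  set y := star U *ᵥ x with hy
  have hAx : A *ᵥ x = U *ᵥ ((Matrix.diagonal (RCLike.ofReal ∘ hA.eigenvalues)) *ᵥ y) := by
    conv_lhs => rw [hA.spectral_theorem, Unitary.conjStarAlgAut_apply]
    rw [hy, Matrix.mulVec_mulVec, Matrix.mulVec_mulVec, Matrix.mul_assoc]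
  rw [qf, hAx, Matrix.dotProduct_mulVec, star_row_dot hA, ← hy]
  rw [dotProduct, Complex.re_sum]
  refine Finset.sum_congr rfl fun i _ => ?_
  show (star y i * ((Matrix.diagonal (RCLike.ofReal ∘ hA.eigenvalues) *ᵥ y) i)).re = _
  rw [Matrix.mulVec_diagonal]
  show (star y i * (Complex.ofReal (hA.eigenvalues i) * y i)).re = _
  simp [Complex.mul_re, Complex.mul_im, Complex.normSq_apply]
  ring

end Spectral
end Stmt13Aux
end

section
open Matrix Finset
namespace Stmt13Aux
variable {n : ℕ}

section Variational
variable {A : Matrix (Fin n) (Fin n) ℂ} (hA : A.IsHermitian)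

local notation "U" => (hA.eigenvectorUnitary : Matrix (Fin n) (Fin n) ℂ)

lemma eig_ge (d : ℕ) (hd : 1 ≤ d) (hdn : d ≤ n) (t : ℝ)
    (V : Submodule ℂ (Fin n → ℂ)) (hV : d ≤ Module.finrank ℂ V)
    (h : ∀ x ∈ V, t * n2 x ≤ qf A x) :
    t ≤ hA.eigenvalues (Tuple.sort hA.eigenvalues ⟨n - d, by omega⟩) := by
  apply count_to_sorted hA.eigenvalues t d hd hdn
  apply model_count hA.eigenvalues t d (V.map (psiEquiv hA).toLinearMap)
  · rwa [LinearEquiv.finrank_map_eq]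
  · rintro y ⟨x, hxV, rfl⟩
    have happ : (psiEquiv hA).toLinearMap x = star U *ᵥ x := rfl
    rw [happ, n2_psi hA, ← qf_eq_sum hA]
    exact h x hxV

lemma exists_eig_subspace (d : ℕ) (hd : 1 ≤ d) (hdn : d ≤ n) :
    ∃ V : Submodule ℂ (Fin n → ℂ), d ≤ Module.finrank ℂ V ∧
      ∀ x ∈ V,
        hA.eigenvalues (Tuple.sort hA.eigenvalues ⟨n - d, by omega⟩) * n2 x ≤ qf A x := by
  classical
  set σ := Tuple.sort hA.eigenvalues with hσ
  set T : Finset (Fin n) := (Finset.Ici (⟨n - d, by omega⟩ : Fin n)).image σ with hT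
  refine ⟨(coordSub T).map ((psiEquiv hA).symm.toLinearMap), ?_, ?_⟩
  · rw [LinearEquiv.finrank_map_eq, finrank_coordSub, hT,
      Finset.card_image_of_injective _ (Equiv.injective σ), Fin.card_Ici]
    show d ≤ n - (n - d)
    omega
  · rintro x ⟨y, hyT, rfl⟩
    have happ : (psiEquiv hA).symm.toLinearMap y = U *ᵥ y := rfl
    have hback : star U *ᵥ (U *ᵥ y) = y := by
      rw [Matrix.mulVec_mulVec, star_mul_U hA, Matrix.one_mulVec]
    rw [happ, qf_eq_sum hA, hback, ← n2_psi hA, hback, n2, Finset.mul_sum]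
    refine Finset.sum_le_sum fun i _ => ?_
    by_cases hi : i ∈ T
    · obtain ⟨j, hj, rfl⟩ := Finset.mem_image.mp hi
      have := Tuple.monotone_sort hA.eigenvalues (Finset.mem_Ici.mp hj)
      exact mul_le_mul_of_nonneg_right this (Complex.normSq_nonneg _)
    · rw [(hyT : ∀ i ∉ T, y i = 0) i hi]
      simp

end Variational

lemma eigenvaluesDesc_eq {Z : Matrix (Fin n) (Fin n) ℂ} (hZ : Z.IsHermitian)
    (d : ℕ) (hd : 1 ≤ d) (hdn : d ≤ n) (h1 : d - 1 < n) (h2 : n - d < n) :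
    eigenvaluesDesc hZ ⟨d - 1, h1⟩
      = hZ.eigenvalues (Tuple.sort hZ.eigenvalues ⟨n - d, h2⟩) := by
  unfold eigenvaluesDesc
  congr 2
  ext
  simp [Fin.val_rev]
  omega

end Stmt13Aux
end

section
open Matrix Finset
namespace Stmt13Aux
variable {n : ℕ}

lemma eig_smul_le {Z Z' : Matrix (Fin n) (Fin n) ℂ} (hZ : Z.IsHermitian)
    (hZ' : Z'.IsHermitian) {c : ℝ} (hc : 0 < c) (hE : Z' = c • Z)
    (d : ℕ) (hd : 1 ≤ d) (hdn : d ≤ n) (h1 : d - 1 < n) :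
    eigenvaluesDesc hZ' ⟨d - 1, h1⟩ ≤ c * eigenvaluesDesc hZ ⟨d - 1, h1⟩ := by
  have h2 : n - d < n := by omega
  rw [eigenvaluesDesc_eq hZ' d hd hdn h1 h2, eigenvaluesDesc_eq hZ d hd hdn h1 h2]
  obtain ⟨V, hV, hVq⟩ := exists_eig_subspace hZ' d hd hdn
  set t' := hZ'.eigenvalues (Tuple.sort hZ'.eigenvalues ⟨n - d, h2⟩) with ht'
  have key : ∀ x ∈ V, (t' / c) * n2 x ≤ qf Z x := by
    intro x hx
    have h3 := hVq x hx
    rw [hE, qf_smul] at h3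
    rw [div_mul_eq_mul_div, div_le_iff₀ hc]
    linarith
  have h4 := eig_ge hZ d hd hdn (t' / c) V hV key
  calc t' = c * (t' / c) := by field_simp
    _ ≤ c * hZ.eigenvalues (Tuple.sort hZ.eigenvalues ⟨n - d, h2⟩) :=
        mul_le_mul_of_nonneg_left h4 hc.le

lemma eig_lower {r : ℕ} (hrn : r < n) {Y Xr W Z : Matrix (Fin n) (Fin n) ℂ}
    (hY : Y.PosSemidef) (hXr : Xr.PosSemidef) (hrk : Xr.rank ≤ r)
    (hZeq : Z = Y - Xr - W) (hZ : Z.IsHermitian) (h1 : n - r - 1 < n) :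
    -(frobNorm W) ≤ eigenvaluesDesc hZ ⟨n - r - 1, h1⟩ := by
  have hA : (Y - Xr).IsHermitian := hY.1.sub hXr.1
  have hd1 : 1 ≤ n - r := by omega
  have hdn : n - r ≤ n := by omega
  have h2 : n - (n - r) < n := by omega
  have hker : n - r ≤ Module.finrank ℂ (LinearMap.ker (Matrix.mulVecLin Xr)) := by
    have h3 := LinearMap.finrank_range_add_finrank_ker (Matrix.mulVecLin Xr)
    rw [Module.finrank_pi, Fintype.card_fin] at h3
    have hr' : Xr.rank ≤ r := hrk
    rw [Matrix.rank] at hr'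
    omega
  have step1 : (0:ℝ) ≤ hA.eigenvalues (Tuple.sort hA.eigenvalues ⟨n - (n - r), h2⟩) := by
    apply eig_ge hA (n - r) hd1 hdn 0 _ hker
    intro x hx
    have hx0 : Xr *ᵥ x = 0 := by rwa [LinearMap.mem_ker, Matrix.mulVecLin_apply] at hx
    rw [zero_mul, qf_sub, qf_zero_of_mulVec_zero hx0]
    have := qf_nonneg hY x
    linarith
  obtain ⟨V, hV, hVq⟩ := exists_eig_subspace hA (n - r) hd1 hdn
  have key : ∀ x ∈ V, (-(frobNorm W)) * n2 x ≤ qf Z x := by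
    intro x hx
    have h4 := hVq x hx
    have h5 : (0:ℝ) ≤ qf (Y - Xr) x :=
      le_trans (mul_nonneg step1 (n2_nonneg x)) h4
    have h6 := (abs_le.mp (abs_qf_le W x)).2
    have h7 : qf Z x = qf (Y - Xr) x - qf W x := by rw [hZeq, qf_sub]
    rw [h7]
    have : (-(frobNorm W)) * n2 x = -(frobNorm W * n2 x) := by ring
    linarith
  have h8 := eig_ge hZ (n - r) hd1 hdn _ V hV key
  rw [eigenvaluesDesc_eq hZ (n - r) hd1 hdn h1 h2]
  exact h8


lemma kappa_neg {m r : ℕ} (hrn : r < n)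
    (M : Matrix (Fin n) (Fin n) ℂ →ₗ[ℝ] EuclideanSpace ℝ (Fin m)) (hM : rComplete M r)
    {Z : Matrix (Fin n) (Fin n) ℂ} (hZ : Z.IsHermitian) (hMZ : M Z = 0) (hZ0 : Z ≠ 0)
    (h1 : n - r - 1 < n) :
    eigenvaluesDesc hZ ⟨n - r - 1, h1⟩ < 0 := by
  classical
  by_contra hge
  push_neg at hge
  rw [eigenvaluesDesc_eq hZ (n - r) (by omega) (by omega) h1 (by omega)] at hge
  have hcount := sorted_to_count hZ.eigenvalues ⟨n - (n - r), by omega⟩ hge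
  have hcount' : (univ.filter fun i => hZ.eigenvalues i < 0).card ≤ r := by
    have h2 : n - (n - r) ≤ r := by omega
    exact le_trans hcount h2
  set lam := hZ.eigenvalues with hlam
  set Um := (hZ.eigenvectorUnitary : Matrix (Fin n) (Fin n) ℂ) with hUm
  set Dp : Matrix (Fin n) (Fin n) ℂ :=
    Matrix.diagonal (fun i => ((max (lam i) 0 : ℝ) : ℂ)) with hDp
  set Dn : Matrix (Fin n) (Fin n) ℂ :=
    Matrix.diagonal (fun i => ((max (-lam i) 0 : ℝ) : ℂ)) with hDn
  set P := Um * Dp * star Um with hP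
  set N := Um * Dn * star Um with hN
  have hdiag : Dp - Dn = Matrix.diagonal (RCLike.ofReal ∘ lam) := by
    have harg : (fun i => ((max (lam i) 0 : ℝ) : ℂ) - ((max (-lam i) 0 : ℝ) : ℂ))
        = (RCLike.ofReal ∘ lam) := by
      funext i
      show ((max (lam i) 0 : ℝ) : ℂ) - ((max (-lam i) 0 : ℝ) : ℂ) = ((lam i : ℝ) : ℂ)
      rw [← Complex.ofReal_sub, max_zero_sub_max_neg_zero_eq_self]
    rw [hDp, hDn, Matrix.diagonal_sub, harg]
  have hPN : P - N = Z := by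
    calc P - N = Um * (Dp - Dn) * star Um := by rw [Matrix.mul_sub, Matrix.sub_mul]
      _ = Z := by
          have hst := hZ.spectral_theorem
          rw [Unitary.conjStarAlgAut_apply] at hst
          rw [hdiag, hlam, hUm, ← hst]
  have hpsdP : P.PosSemidef := by
    have hd : Dp.PosSemidef :=
      Matrix.posSemidef_diagonal_iff.mpr fun i => Complex.zero_le_real.2 (le_max_right _ _)
    have := hd.mul_mul_conjTranspose_same Um
    rwa [← Matrix.star_eq_conjTranspose] at this
  have hpsdN : N.PosSemidef := by
    have hd : Dn.PosSemidef :=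
      Matrix.posSemidef_diagonal_iff.mpr fun i => Complex.zero_le_real.2 (le_max_right _ _)
    have := hd.mul_mul_conjTranspose_same Um
    rwa [← Matrix.star_eq_conjTranspose] at this
  have hUu : IsUnit Um.det := by
    have h3 : IsUnit Um := ⟨Unitary.toUnits hZ.eigenvectorUnitary, rfl⟩
    exact (Matrix.isUnit_iff_isUnit_det Um).mp h3
  have hsUu : IsUnit (star Um).det := by
    have h3 : IsUnit (star Um) := IsUnit.star ⟨Unitary.toUnits hZ.eigenvectorUnitary, rfl⟩
    exact (Matrix.isUnit_iff_isUnit_det (star Um)).mp h3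
  have hrankN : N.rank ≤ r := by
    have e1 : N.rank = (Dn * star Um).rank := by
      rw [hN, Matrix.mul_assoc]
      exact Matrix.rank_mul_eq_right_of_isUnit_det Um (Dn * star Um) hUu
    have e2 : (Dn * star Um).rank = Dn.rank :=
      Matrix.rank_mul_eq_left_of_isUnit_det (star Um) Dn hsUu
    have e3 : Dn.rank = (univ.filter fun i => ((max (-lam i) 0 : ℝ) : ℂ) ≠ 0).card := by
      rw [hDn, Matrix.rank_diagonal, Fintype.card_subtype]
    have e4 : (univ.filter fun i => ((max (-lam i) 0 : ℝ) : ℂ) ≠ 0)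
        = (univ.filter fun i => lam i < 0) := by
      apply Finset.filter_congr
      intro i _
      simp only [Ne, Complex.ofReal_eq_zero]
      constructor
      · intro h
        by_contra hl
        push_neg at hl
        exact h (max_eq_right (by linarith))
      · intro h
        have : max (-lam i) 0 = -lam i := max_eq_left (by linarith)
        rw [this]
        intro hcontra
        simp only [neg_eq_zero] at hcontra
        linarith
    rw [e1, e2, e3, e4]
    exact hcount'
  have hNP : N ≠ P := by
    intro h
    apply hZ0
    rw [← hPN, h, sub_self]
  have hMNP : M N = M P := by
    have h3 : M (P - N) = M P - M N := map_sub M P N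
    rw [hPN, hMZ] at h3
    have := sub_eq_zero.mp h3.symm
    exact this.symm
  exact hM N P hpsdN hrankN hpsdP hNP hMNP

end Stmt13Aux
end

section
open Matrix Finset
namespace Stmt13Aux
variable {n : ℕ}

/-- Real-linear embedding of complex matrices into a real Euclidean space,
preserving the Frobenius norm and the (real) Hilbert-Schmidt inner product. -/
noncomputable def emb : Matrix (Fin n) (Fin n) ℂ →ₗ[ℝ]
    EuclideanSpace ℝ (Fin n × Fin n × Fin 2) where
  toFun X := WithLp.toLp 2 fun p : Fin n × Fin n × Fin 2 => if p.2.2 = 0 then (X p.1 p.2.1).re else (X p.1 p.2.1).im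
  map_add' X Y := by
    ext p
    by_cases h : p.2.2 = 0 <;>
      simp [h, Matrix.add_apply, Complex.add_re, Complex.add_im]
  map_smul' c X := by
    ext p
    by_cases h : p.2.2 = 0 <;>
      simp [h, Matrix.smul_apply, Complex.smul_re, Complex.smul_im]

lemma sum_two_aux (f : Fin 2 → ℝ) : ∑ k, f k = f 0 + f 1 := by
  simp [Fin.sum_univ_two]

lemma norm_emb (X : Matrix (Fin n) (Fin n) ℂ) : ‖emb X‖ = frobNorm X := by
  rw [EuclideanSpace.norm_eq, frobNorm]
  congr 1
  rw [Fintype.sum_prod_type]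
  refine Finset.sum_congr rfl fun i _ => ?_
  rw [Fintype.sum_prod_type]
  refine Finset.sum_congr rfl fun j _ => ?_
  show ∑ k : Fin 2, ‖(emb X) (i, j, k)‖ ^ 2 = Complex.normSq (X i j)
  rw [Fin.sum_univ_two]
  show ‖(if (0 : Fin 2) = 0 then (X i j).re else (X i j).im)‖ ^ 2
      + ‖(if (1 : Fin 2) = 0 then (X i j).re else (X i j).im)‖ ^ 2 = _
  norm_num [Real.norm_eq_abs, sq_abs, Complex.normSq_apply]
  ring

lemma inner_emb (Z W : Matrix (Fin n) (Fin n) ℂ) :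
    (inner ℝ (emb Z) (emb W) : ℝ) = hsInner Z W := by
  have hL : (inner ℝ (emb Z) (emb W) : ℝ)
      = ∑ i, ∑ j, (star (Z i j) * W i j).re := by
    rw [PiLp.inner_apply, Fintype.sum_prod_type]
    refine Finset.sum_congr rfl fun i _ => ?_
    rw [Fintype.sum_prod_type]
    refine Finset.sum_congr rfl fun j _ => ?_
    simp only [RCLike.inner_apply, conj_trivial, mul_comm ((emb W).ofLp _)]
    show ∑ k : Fin 2, (emb Z) (i, j, k) * (emb W) (i, j, k) = _
    rw [Fin.sum_univ_two]
    show (if (0 : Fin 2) = 0 then (Z i j).re else (Z i j).im)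
          * (if (0 : Fin 2) = 0 then (W i j).re else (W i j).im)
        + (if (1 : Fin 2) = 0 then (Z i j).re else (Z i j).im)
          * (if (1 : Fin 2) = 0 then (W i j).re else (W i j).im) = _
    norm_num [Complex.mul_re]
  have hR : hsInner Z W = ∑ j, ∑ i, (star (Z i j) * W i j).re := by
    rw [hsInner, Matrix.trace, Complex.re_sum]
    refine Finset.sum_congr rfl fun i _ => ?_
    rw [Matrix.diag_apply, Matrix.mul_apply, Complex.re_sum]
    refine Finset.sum_congr rfl fun j _ => ?_
    rw [Matrix.conjTranspose_apply]
  rw [hL, hR, Finset.sum_comm]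

end Stmt13Aux
end

section
open Matrix Finset
namespace Stmt13Aux
variable {n : ℕ}

lemma frobNorm_nonneg (X : Matrix (Fin n) (Fin n) ℂ) : 0 ≤ frobNorm X :=
  Real.sqrt_nonneg _

lemma frobNorm_zero : frobNorm (0 : Matrix (Fin n) (Fin n) ℂ) = 0 := by
  simp [frobNorm]

lemma frobNorm_pos {X : Matrix (Fin n) (Fin n) ℂ} (h : X ≠ 0) : 0 < frobNorm X := by
  have h' : ¬ ∀ i j, X i j = 0 := by
    intro hh
    exact h (Matrix.ext fun i j => hh i j)
  push_neg at h'
  obtain ⟨i, j, hij⟩ := h'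
  rw [frobNorm]
  apply Real.sqrt_pos.2
  refine Finset.sum_pos' (fun _ _ => Finset.sum_nonneg fun _ _ => Complex.normSq_nonneg _)
    ⟨i, Finset.mem_univ i, ?_⟩
  exact Finset.sum_pos' (fun _ _ => Complex.normSq_nonneg _)
    ⟨j, Finset.mem_univ j, Complex.normSq_pos.2 hij⟩

lemma frobNorm_smul (c : ℝ) (X : Matrix (Fin n) (Fin n) ℂ) :
    frobNorm (c • X) = |c| * frobNorm X := by
  rw [← norm_emb, _root_.map_smul, norm_smul, norm_emb, Real.norm_eq_abs]

lemma frobNorm_add_le (A B : Matrix (Fin n) (Fin n) ℂ) :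
    frobNorm (A + B) ≤ frobNorm A + frobNorm B := by
  rw [← norm_emb, ← norm_emb, ← norm_emb, map_add]
  exact norm_add_le _ _

lemma herm_smul {Z : Matrix (Fin n) (Fin n) ℂ} (hZ : Z.IsHermitian) (c : ℝ) :
    (c • Z).IsHermitian := by
  have : (c • Z)ᴴ = star c • Zᴴ := Matrix.conjTranspose_smul c Z
  rw [Matrix.IsHermitian, this, star_trivial, hZ.eq]

/-- The Hermitian part of the kernel of `M`, as a real submodule of the matrix space. -/
def kerH {m : ℕ} (M : Matrix (Fin n) (Fin n) ℂ →ₗ[ℝ] EuclideanSpace ℝ (Fin m)) :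
    Submodule ℝ (Matrix (Fin n) (Fin n) ℂ) where
  carrier := {Z | Z.IsHermitian ∧ M Z = 0}
  add_mem' := fun ha hb => ⟨ha.1.add hb.1, by rw [map_add, ha.2, hb.2, add_zero]⟩
  zero_mem' := ⟨Matrix.isHermitian_zero, map_zero M⟩
  smul_mem' := fun c Z hZ => ⟨herm_smul hZ.1 c, by rw [_root_.map_smul, hZ.2, smul_zero]⟩

lemma mem_kerH {m : ℕ} {M : Matrix (Fin n) (Fin n) ℂ →ₗ[ℝ] EuclideanSpace ℝ (Fin m)}
    {Z : Matrix (Fin n) (Fin n) ℂ} :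
    Z ∈ kerH M ↔ Z.IsHermitian ∧ M Z = 0 := Iff.rfl

end Stmt13Aux
end


open Finset in
set_option maxHeartbeats 1000000 in
/-- explicit stability bound.  Let `M` be `r`-complete, surjective onto `ℝ^m`
(on Hermitian matrices) with nontrivial kernel, let `σ_min > 0` be its smallest singular
value, i.e. the least value of `‖M X‖` over Hermitian unit-norm `X` that are
Hilbert–Schmidt-orthogonal to the kernel of `M` in `H(n)`, and let
`κ := −max{λ_{n−r}(Z) : Z ∈ Ker M Hermitian, ‖Z‖₂ = 1}`.  Then for all `ε > 0`,
`X_r ∈ S_r^n`, Hermitian `E` with `‖M E‖₂ ≤ ε` and PSD `Y` with `‖M Y − M(X_r+E)‖₂ ≤ ε`,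
one has `‖Y − X_r‖₂ ≤ (2/σ_min)(1 + 1/κ)·ε`. -/
theorem stmt13 {n m r : ℕ} (hr : 1 ≤ r) (hrn : r < n)
    (M : Matrix (Fin n) (Fin n) ℂ →ₗ[ℝ] EuclideanSpace ℝ (Fin m))
    (hM : rComplete M r)
    (hsurj : ∀ y : EuclideanSpace ℝ (Fin m),
      ∃ X : Matrix (Fin n) (Fin n) ℂ, X.IsHermitian ∧ M X = y)
    (hker : ∃ Z : Matrix (Fin n) (Fin n) ℂ, Z.IsHermitian ∧ M Z = 0 ∧ Z ≠ 0)
    (σmin : ℝ) (hσpos : 0 < σmin)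
    (hσ : IsLeast {s : ℝ | ∃ X : Matrix (Fin n) (Fin n) ℂ, X.IsHermitian ∧
        frobNorm X = 1 ∧
        (∀ Z : Matrix (Fin n) (Fin n) ℂ, Z.IsHermitian → M Z = 0 → hsInner Z X = 0) ∧
        s = ‖M X‖} σmin)
    (κ : ℝ)
    (hκ : IsGreatest {t : ℝ | ∃ (Z : Matrix (Fin n) (Fin n) ℂ) (hZ : Z.IsHermitian),
        M Z = 0 ∧ frobNorm Z = 1 ∧ t = eigenvaluesDesc hZ ⟨n - r - 1, by omega⟩} (-κ)) :
    ∀ ε > (0 : ℝ),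
      ∀ Xr : Matrix (Fin n) (Fin n) ℂ, Xr.PosSemidef → Xr.rank ≤ r →
      ∀ E : Matrix (Fin n) (Fin n) ℂ, E.IsHermitian → ‖M E‖ ≤ ε →
      ∀ Y : Matrix (Fin n) (Fin n) ℂ, Y.PosSemidef → ‖M Y - M (Xr + E)‖ ≤ ε →
        frobNorm (Y - Xr) ≤ (2 / σmin) * (1 + 1 / κ) * ε := by
  classical
  intro ε hε Xr hXr hXrrank E hE hME Y hY hMY
  have h1 : n - r - 1 < n := by omega
  -- κ is positive, by r-completeness
  obtain ⟨Z0, hZ0h, hZ0M, hZ0f, hZ0eq⟩ := hκ.1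
  have hZ0ne : Z0 ≠ 0 := by
    intro h
    rw [h, Stmt13Aux.frobNorm_zero] at hZ0f
    norm_num at hZ0f
  have hκpos : 0 < κ := by
    have hneg := Stmt13Aux.kappa_neg hrn M hM hZ0h hZ0M hZ0ne h1
    rw [← hZ0eq] at hneg
    linarith
  set A := Y - Xr with hA
  have hAh : A.IsHermitian := hY.1.sub hXr.1
  have hMA : ‖M A‖ ≤ 2 * ε := by
    have e1 : M A = (M Y - M (Xr + E)) + M E := by
      rw [hA, _root_.map_sub, _root_.map_add]; abel
    rw [e1]
    calc ‖(M Y - M (Xr + E)) + M E‖ ≤ ‖M Y - M (Xr + E)‖ + ‖M E‖ := norm_add_le _ _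
      _ ≤ ε + ε := add_le_add hMY hME
      _ = 2 * ε := by ring
  have hz := Submodule.coe_mem (Submodule.orthogonalProjectionOnto
    ((Stmt13Aux.kerH M).map Stmt13Aux.emb) (Stmt13Aux.emb A))
  obtain ⟨Zm, hZmK, hZmEq⟩ := Submodule.mem_map.mp hz
  set W := A - Zm with hW
  have hembW : Stmt13Aux.emb W
      = Stmt13Aux.emb A - (Submodule.orthogonalProjectionOnto ((Stmt13Aux.kerH M).map Stmt13Aux.emb)
        (Stmt13Aux.emb A) : EuclideanSpace ℝ _) := by
    rw [hW, _root_.map_sub, hZmEq]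
  have hWorth : Stmt13Aux.emb W ∈ ((Stmt13Aux.kerH M).map Stmt13Aux.emb)ᗮ := by
    rw [hembW]
    exact Submodule.sub_starProjection_mem_orthogonal _
  have hZmH : Zm.IsHermitian := hZmK.1
  have hZmM : M Zm = 0 := hZmK.2
  have hWh : W.IsHermitian := hAh.sub hZmH
  have hMW : M W = M A := by rw [hW, _root_.map_sub, hZmM, sub_zero]
  have hOrthAll : ∀ Z' : Matrix (Fin n) (Fin n) ℂ, Z'.IsHermitian → M Z' = 0 →
      hsInner Z' W = 0 := by
    intro Z' h1' h2'
    rw [← Stmt13Aux.inner_emb]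
    have hmem : Stmt13Aux.emb Z' ∈ (Stmt13Aux.kerH M).map Stmt13Aux.emb :=
      Submodule.mem_map_of_mem (⟨h1', h2'⟩ : Z' ∈ Stmt13Aux.kerH M)
    exact (Submodule.mem_orthogonal _ _).mp hWorth _ hmem
  -- bound on the norm of W via σmin
  have hWbound : σmin * frobNorm W ≤ 2 * ε := by
    rcases eq_or_ne W 0 with h | h
    · rw [h, Stmt13Aux.frobNorm_zero, mul_zero]
      positivity
    · have hc : 0 < frobNorm W := Stmt13Aux.frobNorm_pos h
      have hmem : σmin ≤ ‖M ((frobNorm W)⁻¹ • W)‖ := by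
        apply hσ.2
        refine ⟨(frobNorm W)⁻¹ • W, Stmt13Aux.herm_smul hWh _, ?_, ?_, rfl⟩
        · rw [Stmt13Aux.frobNorm_smul, abs_inv, abs_of_pos hc, inv_mul_cancel₀ hc.ne']
        · intro Z' hZ' hMZ'
          have hs := hOrthAll Z' hZ' hMZ'
          rw [← Stmt13Aux.inner_emb] at hs ⊢
          rw [_root_.map_smul, real_inner_smul_right, hs, mul_zero]
      rw [_root_.map_smul, norm_smul, Real.norm_eq_abs, abs_inv, abs_of_pos hc, hMW] at hmem
      have h2 : σmin * frobNorm W ≤ ‖M A‖ := by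
        rw [inv_mul_eq_div] at hmem
        exact (le_div_iff₀ hc).mp hmem
      exact h2.trans hMA
  -- bound on the norm of Zm via κ
  have hZmbound : κ * frobNorm Zm ≤ frobNorm W := by
    rcases eq_or_ne Zm 0 with h | h
    · rw [h, Stmt13Aux.frobNorm_zero, mul_zero]
      exact Stmt13Aux.frobNorm_nonneg W
    · have hc : 0 < frobNorm Zm := Stmt13Aux.frobNorm_pos h
      set Zu := (frobNorm Zm)⁻¹ • Zm with hZu
      have hZuh : Zu.IsHermitian := Stmt13Aux.herm_smul hZmH _
      have hZuM : M Zu = 0 := by rw [hZu, _root_.map_smul, hZmM, smul_zero]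
      have hZuf : frobNorm Zu = 1 := by
        rw [hZu, Stmt13Aux.frobNorm_smul, abs_inv, abs_of_pos hc, inv_mul_cancel₀ hc.ne']
      have hZueq : Zm = (frobNorm Zm) • Zu := by
        rw [hZu, smul_inv_smul₀ hc.ne']
      have hκ2 : eigenvaluesDesc hZuh ⟨n - r - 1, h1⟩ ≤ -κ :=
        hκ.2 ⟨Zu, hZuh, hZuM, hZuf, rfl⟩
      have hsc := Stmt13Aux.eig_smul_le hZuh hZmH hc hZueq (n - r)
        (by omega) (by omega) h1
      have hZmYXW : Zm = Y - Xr - W := by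
        rw [hW, hA, sub_sub_cancel]
      have hlow := Stmt13Aux.eig_lower hrn hY hXr hXrrank hZmYXW hZmH h1
      have hup : eigenvaluesDesc hZmH ⟨n - r - 1, h1⟩ ≤ frobNorm Zm * (-κ) :=
        hsc.trans (mul_le_mul_of_nonneg_left hκ2 hc.le)
      have hfin : -(frobNorm W) ≤ frobNorm Zm * (-κ) := hlow.trans hup
      rw [mul_neg] at hfin
      linarith [mul_comm (frobNorm Zm) κ]
  -- put everything together
  have htot : frobNorm A ≤ frobNorm W + frobNorm Zm := by
    have hAW : A = W + Zm := by rw [hW, sub_add_cancel]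
    rw [hAW]
    exact Stmt13Aux.frobNorm_add_le W Zm
  have hzleq : frobNorm Zm ≤ frobNorm W / κ := by
    rw [le_div_iff₀ hκpos]
    linarith [mul_comm (frobNorm Zm) κ]
  have hwleq : frobNorm W ≤ 2 * ε / σmin := by
    rw [le_div_iff₀ hσpos]
    linarith [mul_comm (frobNorm W) σmin]
  calc frobNorm A ≤ frobNorm W + frobNorm Zm := htot
    _ ≤ frobNorm W + frobNorm W / κ := by linarith
    _ = frobNorm W * (1 + 1 / κ) := by rw [mul_add, mul_one, mul_one_div]
    _ ≤ (2 * ε / σmin) * (1 + 1 / κ) := by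
        apply mul_le_mul_of_nonneg_right hwleq
        positivity
    _ = (2 / σmin) * (1 + 1 / κ) * ε := by ring
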